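/- arXiv:0712.3237 — 6 statements merged into one kernel-verified Lean document; each statement's English description precedes it below -/
import Mathlib

section
/- Let λ > δ > 0 and x₀ > 0. Let x, τ, H, G : ℝ → ℝ be functions with x and τ differentiable, and suppose that at every time t at which x(t) < x₀ the following hold: x(t) > 0, H(t) ≥ 0, x′(t) = 2τ(t)x(t)², τ′(t) = −2x(t)H(t) + x(t)²G(t), λ − δ ≤ τ(t)² + H(t) ≤ λ + δ, and x(t)|G(t)| ≤ τ(t)² + H(t). Assume x(0) < x₀. Then: (a) if τ(0) ≤ 0, then τ(t) ≤ 0 for all t ≥ 0, x is nonincreasing on [0,∞), and x(t) → 0 as t → +∞; (b) if τ(0) ≥ 0, then x(t) → 0 as t → −∞. -/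
open Filter Topology

private lemma aux_antitone {f : ℝ → ℝ} (hd : Differentiable ℝ f) {a : ℝ}
    (h : ∀ t, a ≤ t → deriv f t ≤ 0) : AntitoneOn f (Set.Ici a) :=
  antitoneOn_of_deriv_nonpos (convex_Ici a) hd.continuous.continuousOn
    hd.differentiableOn (fun t ht => h t (le_of_lt (by simpa [interior_Ici] using ht)))

private lemma deriv_neg_right {f : ℝ → ℝ} {f' t : ℝ} (hf : HasDerivAt f f' t) (h' : f' < 0) :
    ∀ᶠ s in 𝓝[>] t, f s < f t := by
  have hs := hasDerivAt_iff_tendsto_slope.mp hf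
  have hs' : Tendsto (slope f t) (𝓝[>] t) (𝓝 f') :=
    hs.mono_left (nhdsWithin_mono _ (fun u hu => ne_of_gt hu))
  have hev : ∀ᶠ s in 𝓝[>] t, slope f t s < 0 := hs' (Iio_mem_nhds h')
  filter_upwards [hev, self_mem_nhdsWithin] with s hsl hst
  rw [slope_def_field] at hsl
  have hst' : (0:ℝ) < s - t := sub_pos.mpr hst
  have := (div_neg_iff.mp hsl)
  rcases this with ⟨h1,h2⟩|⟨h1,h2⟩
  · linarith
  · linarith

private lemma barrier {f : ℝ → ℝ} (hd : Differentiable ℝ f) {a : ℝ} (h0 : f a ≤ 0)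
    (key : ∀ t, a ≤ t → f t = 0 → deriv f t < 0) : ∀ t, a ≤ t → f t ≤ 0 := by
  by_contra hcon
  push_neg at hcon
  obtain ⟨b, hab, hb⟩ := hcon
  set A : Set ℝ := {t | a ≤ t ∧ 0 < f t} with hA
  have hAne : A.Nonempty := ⟨b, hab, hb⟩
  have hbdd : BddBelow A := ⟨a, fun t ht => ht.1⟩
  set T := sInf A with hT
  have hTa : a ≤ T := le_csInf hAne (fun t ht => ht.1)
  have hbefore : ∀ s, a ≤ s → s < T → f s ≤ 0 := by
    intro s hs hsT
    by_contra hh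
    push_neg at hh
    exact absurd (csInf_le hbdd ⟨hs, hh⟩) (not_le.mpr hsT)
  have hfT : f T ≤ 0 := by
    rcases eq_or_lt_of_le hTa with h | h
    · rw [← h]; exact h0
    · have htend : Tendsto f (𝓝[<] T) (𝓝 (f T)) :=
        (hd.continuous.continuousAt).mono_left nhdsWithin_le_nhds
      refine le_of_tendsto htend ?_
      filter_upwards [Ioo_mem_nhdsLT_of_mem (by exact ⟨h, le_refl T⟩ : T ∈ Set.Ioc a T)]
        with s hs
      exact hbefore s hs.1.le hs.2
  have hTnotA : T ∉ A := fun h => absurd h.2 (not_lt.mpr hfT)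
  have hright : ∀ᶠ s in 𝓝[>] T, f s ≤ 0 := by
    rcases hfT.lt_or_eq with hlt | heq
    · have : ∀ᶠ s in 𝓝 T, f s < 0 :=
        (hd.continuous.continuousAt).preimage_mem_nhds (Iio_mem_nhds hlt)
      exact (this.filter_mono nhdsWithin_le_nhds).mono (fun s hs => hs.le)
    · have hder := key T hTa heq
      have := deriv_neg_right (hd T).hasDerivAt hder
      exact this.mono (fun s hs => by rw [heq] at hs; exact hs.le)
  obtain ⟨u, hu, hsub⟩ := mem_nhdsGT_iff_exists_Ioo_subset.mp hright
  have hall : ∀ t ∈ A, u ≤ t := by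
    intro t ht
    by_contra htu
    push_neg at htu
    have hTt : T ≤ t := csInf_le hbdd ht
    rcases eq_or_lt_of_le hTt with h | h
    · exact hTnotA (h ▸ ht)
    · exact absurd (hsub ⟨h, htu⟩) (not_le.mpr ht.2)
  have : u ≤ T := le_csInf hAne hall
  exact absurd hu (not_lt.mpr this)

set_option maxHeartbeats 1000000 in
private lemma forward (lam δ x₀ : ℝ) (hδ : 0 < δ) (hδlam : δ < lam) (hx₀ : 0 < x₀)
    (x τ H G : ℝ → ℝ) (hxd : Differentiable ℝ x) (hτd : Differentiable ℝ τ)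
    (hyp : ∀ t : ℝ, x t < x₀ →
      0 < x t ∧ 0 ≤ H t ∧
      deriv x t = 2 * τ t * (x t) ^ 2 ∧
      deriv τ t = -2 * x t * H t + (x t) ^ 2 * G t ∧
      lam - δ ≤ (τ t) ^ 2 + H t ∧ (τ t) ^ 2 + H t ≤ lam + δ ∧
      x t * |G t| ≤ (τ t) ^ 2 + H t)
    (hx0 : x 0 < x₀) (hτ0 : τ 0 ≤ 0) :
    (∀ t : ℝ, 0 ≤ t → x t < x₀ ∧ τ t ≤ 0) ∧ AntitoneOn x (Set.Ici 0) ∧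
      Tendsto x atTop (𝓝 0) := by
  have hδ' : (0:ℝ) < lam - δ := by linarith
  -- the key derivative bound for τ
  have hτderiv : ∀ t, x t < x₀ → deriv τ t ≤ x t * (2 * (τ t) ^ 2 - (lam - δ)) := by
    intro t ht
    obtain ⟨hx, hH, _, hdτ, hE1, _, hG⟩ := hyp t ht
    rw [hdτ]
    have hG' : G t ≤ |G t| := le_abs_self _
    nlinarith [mul_le_mul_of_nonneg_left hG hx.le, mul_le_mul_of_nonneg_left hE1 hx.le,
      mul_le_mul_of_nonneg_left hG' (mul_pos hx hx).le]
  -- invariance: x < x₀ and τ ≤ 0 for all t ≥ 0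
  have hinv : ∀ t : ℝ, 0 ≤ t → x t < x₀ ∧ τ t ≤ 0 := by
    by_contra hcon
    push_neg at hcon
    set A : Set ℝ := {t | 0 ≤ t ∧ (x₀ ≤ x t ∨ 0 < τ t)} with hA
    have hAne : A.Nonempty := by
      obtain ⟨t, ht0, ht⟩ := hcon
      by_cases hxt : x t < x₀
      · exact ⟨t, ht0, Or.inr (ht hxt)⟩
      · exact ⟨t, ht0, Or.inl (not_lt.mp hxt)⟩
    have hbdd : BddBelow A := ⟨0, fun t ht => ht.1⟩
    set T := sInf A with hT
    have hTa : (0:ℝ) ≤ T := le_csInf hAne (fun t ht => ht.1)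
    have hbefore : ∀ s, 0 ≤ s → s < T → x s < x₀ ∧ τ s ≤ 0 := by
      intro s hs hsT
      by_contra hh
      push_neg at hh
      refine absurd (csInf_le hbdd ?_) (not_le.mpr hsT)
      by_cases hxs : x s < x₀
      · exact ⟨hs, Or.inr (hh hxs)⟩
      · exact ⟨hs, Or.inl (not_lt.mp hxs)⟩
    have hxT : x T < x₀ := by
      rcases eq_or_lt_of_le hTa with h | h
      · rw [← h]; exact hx0
      · have hanti : AntitoneOn x (Set.Icc 0 T) := by
          apply antitoneOn_of_deriv_nonpos (convex_Icc 0 T) hxd.continuous.continuousOn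
            hxd.differentiableOn
          intro s hs
          rw [interior_Icc] at hs
          obtain ⟨hxs, hτs⟩ := hbefore s hs.1.le hs.2
          obtain ⟨hxpos, _, hdx, _⟩ := hyp s hxs
          rw [hdx]
          nlinarith [sq_nonneg (x s)]
        calc x T ≤ x 0 := hanti ⟨le_refl 0, hTa⟩ ⟨hTa, le_refl T⟩ hTa
          _ < x₀ := hx0
    have hτT : τ T ≤ 0 := by
      rcases eq_or_lt_of_le hTa with h | h
      · rw [← h]; exact hτ0
      · have htend : Tendsto τ (𝓝[<] T) (𝓝 (τ T)) :=
          (hτd.continuous.continuousAt).mono_left nhdsWithin_le_nhds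
        refine le_of_tendsto htend ?_
        filter_upwards [Ioo_mem_nhdsLT_of_mem (⟨h, le_refl T⟩ : T ∈ Set.Ioc 0 T)]
          with s hs
        exact (hbefore s hs.1.le hs.2).2
    have hTnotA : T ∉ A := by
      intro h
      rcases h.2 with h' | h'
      · exact absurd hxT (not_lt.mpr h')
      · exact absurd hτT (not_le.mpr h')
    have hxright : ∀ᶠ s in 𝓝[>] T, x s < x₀ := by
      have h1 : ∀ᶠ s in 𝓝 T, x s < x₀ :=
        (hxd.continuous.continuousAt).preimage_mem_nhds (Iio_mem_nhds hxT)
      exact h1.filter_mono nhdsWithin_le_nhds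
    have hτright : ∀ᶠ s in 𝓝[>] T, τ s ≤ 0 := by
      rcases hτT.lt_or_eq with hlt | heq
      · have : ∀ᶠ s in 𝓝 T, τ s < 0 :=
          (hτd.continuous.continuousAt).preimage_mem_nhds (Iio_mem_nhds hlt)
        exact (this.filter_mono nhdsWithin_le_nhds).mono (fun s hs => hs.le)
      · have hder : deriv τ T < 0 := by
          have := hτderiv T hxT
          have hxp := (hyp T hxT).1
          rw [heq] at this
          nlinarith [mul_pos hxp hδ']
        have := deriv_neg_right (hτd T).hasDerivAt hder
        exact this.mono (fun s hs => by rw [heq] at hs; exact hs.le)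
    obtain ⟨u, hu, hsub⟩ := mem_nhdsGT_iff_exists_Ioo_subset.mp
      (hxright.and hτright)
    have hall : ∀ t ∈ A, u ≤ t := by
      intro t ht
      by_contra htu
      push_neg at htu
      have hTt : T ≤ t := csInf_le hbdd ht
      rcases eq_or_lt_of_le hTt with h | h
      · exact hTnotA (h ▸ ht)
      · obtain ⟨h1, h2⟩ := hsub ⟨h, htu⟩
        rcases ht.2 with h' | h'
        · exact absurd h1 (not_lt.mpr h')
        · exact absurd h2 (not_le.mpr h')
    exact absurd hu (not_lt.mpr (le_csInf hAne hall))
  have hxpos : ∀ t : ℝ, 0 ≤ t → 0 < x t := fun t ht => (hyp t (hinv t ht).1).1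
  have hx_anti : AntitoneOn x (Set.Ici 0) := by
    apply aux_antitone hxd
    intro t ht
    obtain ⟨hxt, hτt⟩ := hinv t ht
    obtain ⟨hxp, _, hdx, _⟩ := hyp t hxt
    rw [hdx]
    nlinarith [sq_nonneg (x t)]
  have key : ∀ ε : ℝ, 0 < ε → ∃ t₀, 0 ≤ t₀ ∧ x t₀ ≤ ε := by
    intro ε hε
    by_contra hcon
    push_neg at hcon
    obtain ⟨c, hcpos, hc2⟩ : ∃ c : ℝ, 0 < c ∧ c ^ 2 = (lam - δ)/4 :=
      ⟨Real.sqrt ((lam - δ)/4), Real.sqrt_pos.mpr (by positivity),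
        Real.sq_sqrt (by positivity)⟩
    have phase1 : ∃ t₁, 0 ≤ t₁ ∧ τ t₁ ≤ -c := by
      by_contra h1
      push_neg at h1
      set k := ε * ((lam - δ)/2) with hk
      have hkpos : 0 < k := by positivity
      have hg : AntitoneOn (fun t => τ t + k * t) (Set.Ici 0) := by
        apply aux_antitone (hτd.add (differentiable_id.const_mul k))
        intro t ht
        have hderg : deriv (fun s => τ s + k * s) t = deriv τ t + k := by
          have hh : HasDerivAt (fun s : ℝ => τ s + k * s) (deriv τ t + k * 1) t :=
            ((hτd t).hasDerivAt.add ((hasDerivAt_id t).const_mul k))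
          simpa using hh.deriv
        simp only [id_eq]
        rw [show (τ + fun y => k * y) = (fun s => τ s + k * s) from rfl, hderg]
        obtain ⟨hxt, hτt⟩ := hinv t ht
        have hd := hτderiv t hxt
        have hτ2 : (τ t) ^ 2 ≤ c ^ 2 := by nlinarith [h1 t ht]
        have hεx : ε < x t := hcon t ht
        have hmneg : (0:ℝ) ≤ (lam - δ) - 2 * (τ t) ^ 2 := by nlinarith
        have hprod : 0 ≤ (x t - ε) * ((lam - δ) - 2 * (τ t) ^ 2) :=
          mul_nonneg (by linarith) hmneg
        rw [hk]
        nlinarith [mul_le_mul_of_nonneg_left hmneg hε.le]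
      have ht' : (0:ℝ) ≤ (c + 1)/k := by positivity
      have hmono := hg Set.self_mem_Ici (Set.mem_Ici.mpr ht') ht'
      simp only at hmono
      have hkt : k * ((c + 1)/k) = c + 1 := by field_simp
      have hgt := h1 _ ht'
      rw [hkt] at hmono
      linarith
    obtain ⟨t₁, ht₁0, ht₁⟩ := phase1
    have phase2 : ∀ t, t₁ ≤ t → τ t ≤ -c := by
      have hb := barrier (f := fun t => τ t + c) (hτd.add_const c)
        (a := t₁) (by show τ t₁ + c ≤ 0; linarith) ?_
      · intro t ht
        have := hb t ht
        change τ t + c ≤ 0 at this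
        linarith
      · intro t ht h0
        change τ t + c = 0 at h0
        rw [deriv_add_const]
        have ht0 : (0:ℝ) ≤ t := le_trans ht₁0 ht
        have hxt := (hinv t ht0).1
        have hxp := (hyp t hxt).1
        have hd := hτderiv t hxt
        have hτt : τ t = -c := by linarith
        rw [hτt] at hd
        nlinarith [mul_pos hxp hδ']
    set m := 2 * c * ε ^ 2 with hm
    have hmpos : 0 < m := by positivity
    have hg2 : AntitoneOn (fun t => x t + m * t) (Set.Ici t₁) := by
      apply aux_antitone (hxd.add (differentiable_id.const_mul m))
      intro t ht
      have hderg : deriv (fun s => x s + m * s) t = deriv x t + m := by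
        have hh : HasDerivAt (fun s : ℝ => x s + m * s) (deriv x t + m * 1) t :=
          ((hxd t).hasDerivAt.add ((hasDerivAt_id t).const_mul m))
        simpa using hh.deriv
      simp only [id_eq]
      rw [show (x + fun y => m * y) = (fun s => x s + m * s) from rfl, hderg]
      have ht0 : (0:ℝ) ≤ t := le_trans ht₁0 ht
      obtain ⟨hxt, _⟩ := hinv t ht0
      obtain ⟨hxp, _, hdx, _⟩ := hyp t hxt
      rw [hdx]
      have hτc := phase2 t ht
      have hεx : ε < x t := hcon t ht0
      have hx2 : ε ^ 2 ≤ (x t) ^ 2 := by nlinarith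
      rw [hm]
      have ha : 2 * τ t * x t ^ 2 ≤ 2 * (-c) * x t ^ 2 := by nlinarith [sq_nonneg (x t)]
      have hb : 2 * (-c) * x t ^ 2 ≤ 2 * (-c) * ε ^ 2 := by nlinarith
      linarith
    set Tt := t₁ + (x t₁ + 1)/m with hTt
    have hxt₁pos : 0 < x t₁ := hxpos t₁ ht₁0
    have hTt1 : t₁ ≤ Tt := le_add_of_nonneg_right (by positivity)
    have hmono := hg2 Set.self_mem_Ici (Set.mem_Ici.mpr hTt1) hTt1
    simp only at hmono
    have hxTt : 0 < x Tt := hxpos Tt (le_trans ht₁0 hTt1)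
    have hmT : m * Tt = m * t₁ + (x t₁ + 1) := by
      rw [hTt]; field_simp
    rw [hmT] at hmono
    linarith
  have htend : Tendsto x atTop (𝓝 0) := by
    rw [tendsto_order]
    constructor
    · intro l hl
      filter_upwards [eventually_ge_atTop (0:ℝ)] with t ht
      exact lt_trans hl (hxpos t ht)
    · intro u hu
      obtain ⟨t₀, ht₀0, ht₀⟩ := key (u/2) (by linarith)
      filter_upwards [eventually_ge_atTop t₀] with t ht
      have h1 : x t ≤ x t₀ :=
        hx_anti (Set.mem_Ici.mpr ht₀0) (Set.mem_Ici.mpr (le_trans ht₀0 ht)) ht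
      linarith
  exact ⟨hinv, hx_anti, htend⟩


/-- Coordinate form of Lemma 2.1 (nontrapping near the boundary of a scattering
manifold): along the Hamiltonian flow in scattering coordinates, if `x 0 < x₀`
then `x → 0` forward in time when `τ 0 ≤ 0`, and backward in time when `τ 0 ≥ 0`. -/
theorem stmt0 (lam δ x₀ : ℝ) (hδ : 0 < δ) (hδlam : δ < lam) (hx₀ : 0 < x₀)
    (x τ H G : ℝ → ℝ) (hxd : Differentiable ℝ x) (hτd : Differentiable ℝ τ)
    (hyp : ∀ t : ℝ, x t < x₀ →
      0 < x t ∧ 0 ≤ H t ∧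
      deriv x t = 2 * τ t * (x t) ^ 2 ∧
      deriv τ t = -2 * x t * H t + (x t) ^ 2 * G t ∧
      lam - δ ≤ (τ t) ^ 2 + H t ∧ (τ t) ^ 2 + H t ≤ lam + δ ∧
      x t * |G t| ≤ (τ t) ^ 2 + H t)
    (hx0 : x 0 < x₀) :
    (τ 0 ≤ 0 →
      (∀ t : ℝ, 0 ≤ t → τ t ≤ 0) ∧ AntitoneOn x (Set.Ici 0) ∧
        Tendsto x atTop (𝓝 0)) ∧
    (0 ≤ τ 0 → Tendsto x atBot (𝓝 0)) := by
  constructor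
  · intro hτ0
    obtain ⟨hinv, hanti, htend⟩ :=
      forward lam δ x₀ hδ hδlam hx₀ x τ H G hxd hτd hyp hx0 hτ0
    exact ⟨fun t ht => (hinv t ht).2, hanti, htend⟩
  · intro hτ0
    have hxd' : Differentiable ℝ (fun t => x (-t)) := hxd.comp differentiable_neg
    have hτd' : Differentiable ℝ (fun t => -τ (-t)) := (hτd.comp differentiable_neg).neg
    have hderx : ∀ t : ℝ, deriv (fun s => x (-s)) t = -deriv x (-t) := by
      intro t
      have h1 : HasDerivAt (fun s : ℝ => x (-s)) (deriv x (-t) * (-1)) t :=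
        (hxd (-t)).hasDerivAt.comp t (hasDerivAt_neg t)
      simpa using h1.deriv
    have hderτ : ∀ t : ℝ, deriv (fun s => -τ (-s)) t = deriv τ (-t) := by
      intro t
      have h1 : HasDerivAt (fun s : ℝ => τ (-s)) (deriv τ (-t) * (-1)) t :=
        (hτd (-t)).hasDerivAt.comp t (hasDerivAt_neg t)
      have h2 := h1.neg
      simpa using h2.deriv
    have hyp' : ∀ t : ℝ, (fun t => x (-t)) t < x₀ →
        0 < (fun t => x (-t)) t ∧ 0 ≤ (fun t => H (-t)) t ∧
        deriv (fun t => x (-t)) t = 2 * (fun t => -τ (-t)) t * ((fun t => x (-t)) t) ^ 2 ∧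
        deriv (fun t => -τ (-t)) t =
          -2 * (fun t => x (-t)) t * (fun t => H (-t)) t +
            ((fun t => x (-t)) t) ^ 2 * (fun t => G (-t)) t ∧
        lam - δ ≤ ((fun t => -τ (-t)) t) ^ 2 + (fun t => H (-t)) t ∧
        ((fun t => -τ (-t)) t) ^ 2 + (fun t => H (-t)) t ≤ lam + δ ∧
        (fun t => x (-t)) t * |(fun t => G (-t)) t| ≤
          ((fun t => -τ (-t)) t) ^ 2 + (fun t => H (-t)) t := by
      intro t ht
      simp only at ht ⊢
      obtain ⟨h1, h2, h3, h4, h5, h6, h7⟩ := hyp (-t) ht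
      have hsq : (-τ (-t)) ^ 2 = (τ (-t)) ^ 2 := by ring
      refine ⟨h1, h2, ?_, ?_, ?_, ?_, ?_⟩
      · rw [hderx t, h3]; ring
      · rw [hderτ t, h4]
      · rw [hsq]; exact h5
      · rw [hsq]; exact h6
      · rw [hsq]; exact h7
    have hx0' : (fun t => x (-t)) 0 < x₀ := by simpa using hx0
    have hτ0' : (fun t => -τ (-t)) 0 ≤ 0 := by simpa using hτ0
    obtain ⟨_, _, htend⟩ :=
      forward lam δ x₀ hδ hδlam hx₀ (fun t => x (-t)) (fun t => -τ (-t))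
        (fun t => H (-t)) (fun t => G (-t)) hxd' hτd' hyp' hx0' hτ0'
    have h2 := htend.comp tendsto_neg_atBot_atTop
    have heq : ((fun t => x (-t)) ∘ Neg.neg) = x := by
      funext t; simp [Function.comp]
    rwa [heq] at h2
end

section
/- Let λ > δ > 0. Let x, τ, H, G : ℝ → ℝ with x and τ differentiable, and suppose for all t ≥ 0: x(t) > 0, H(t) ≥ 0, x′(t) = 2τ(t)x(t)², τ′(t) = −2x(t)H(t) + x(t)²G(t), τ(t)² + H(t) ≥ λ − δ, and x(t)|G(t)| ≤ τ(t)² + H(t). Then for all t ≥ 0, τ(t)/x(t) ≤ τ(0)/x(0) − (λ − δ)t; in particular τ(t)/x(t) → −∞ as t → ∞. -/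
open Filter Topology

/-- The key monotonicity estimate in the proof of Lemma 2.1: `τ/x` decreases at
rate at least `λ - δ`, hence tends to `-∞`. -/
theorem stmt2 (lam δ : ℝ) (hδ : 0 < δ) (hδlam : δ < lam)
    (x τ H G : ℝ → ℝ) (hxd : Differentiable ℝ x) (hτd : Differentiable ℝ τ)
    (hyp : ∀ t : ℝ, 0 ≤ t →
      0 < x t ∧ 0 ≤ H t ∧
      deriv x t = 2 * τ t * (x t) ^ 2 ∧
      deriv τ t = -2 * x t * H t + (x t) ^ 2 * G t ∧
      lam - δ ≤ (τ t) ^ 2 + H t ∧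
      x t * |G t| ≤ (τ t) ^ 2 + H t) :
    (∀ t : ℝ, 0 ≤ t → τ t / x t ≤ τ 0 / x 0 - (lam - δ) * t) ∧
    Tendsto (fun t => τ t / x t) atTop atBot := by
  set c := lam - δ with hc
  have hc0 : 0 < c := sub_pos.mpr hδlam
  have hanti : AntitoneOn (fun s => τ s / x s + c * s) (Set.Ici (0:ℝ)) := by
    apply antitoneOn_of_deriv_nonpos (convex_Ici 0)
    · exact ((hτd.continuous.continuousOn.div hxd.continuous.continuousOn
        (fun s hs => (hyp s hs).1.ne')).add (continuous_const.mul continuous_id).continuousOn)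
    · intro s hs
      rw [interior_Ici] at hs
      have hx0 := (hyp s hs.le).1
      exact (((hτd s).div (hxd s) hx0.ne').add ((differentiableAt_id.const_mul c))).differentiableWithinAt
    · intro s hs
      rw [interior_Ici] at hs
      obtain ⟨hx0, hH0, hdx, hdτ, hE, hGb⟩ := hyp s hs.le
      have hdf : DifferentiableAt ℝ (fun u => τ u / x u) s := (hτd s).div (hxd s) hx0.ne'
      have hdg : DifferentiableAt ℝ (fun u => c * u) s := differentiableAt_id.const_mul c
      rw [deriv_fun_add hdf hdg, deriv_fun_div (hτd s) (hxd s) hx0.ne', hdx, hdτ]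
      have hderivc : deriv (fun u => c * u) s = c := by
        simpa using ((hasDerivAt_id s).const_mul c).deriv
      rw [hderivc]
      have hx2 : (0:ℝ) < x s ^ 2 := pow_pos hx0 2
      have hxG : x s * G s ≤ τ s ^ 2 + H s :=
        le_trans (mul_le_mul_of_nonneg_left (le_abs_self _) hx0.le) hGb
      have hnum : (-2 * x s * H s + x s ^ 2 * G s) * x s - τ s * (2 * τ s * x s ^ 2)
          = x s ^ 2 * (-2 * H s + x s * G s - 2 * τ s ^ 2) := by ring
      rw [hnum, mul_comm, mul_div_assoc, div_self hx2.ne', mul_one]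
      nlinarith
  have key : ∀ t : ℝ, 0 ≤ t → τ t / x t ≤ τ 0 / x 0 - c * t := by
    intro t ht
    have := hanti (Set.self_mem_Ici) (Set.mem_Ici.mpr ht) ht
    nlinarith [this]
  refine ⟨key, ?_⟩
  apply tendsto_atBot_mono' atTop (f₁ := fun t => τ 0 / x 0 - c * t)
  · filter_upwards [eventually_ge_atTop (0:ℝ)] with t ht using key t ht
  · have h1 : Tendsto (fun t : ℝ => c * t) atTop atTop :=
      Tendsto.const_mul_atTop hc0 tendsto_id
    have h2 : Tendsto (fun t : ℝ => τ 0 / x 0 + -(c * t)) atTop atBot :=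
      tendsto_atBot_add_const_left _ _ (tendsto_neg_atTop_atBot.comp h1)
    simpa [sub_eq_add_neg] using h2
end

section
/- Let c₁ > 0 and M > 0. Let x, τ : (−∞, 0] → ℝ be differentiable with x(t) > 0, x′(t) = 2τ(t)x(t)², τ′(t) ≤ −c₁x(t), and τ(t) ≤ M for all t ≤ 0. Then for every t ≤ 0, τ(t) ≥ τ(0) + c₁ (log x(0) − log x(t)) / (2M). -/
/-- Quantitative lower bound for `τ` from Step 2 of the proof of Lemma 3.1:
integrating `ẋ = 2τx²`, `τ̇ ≤ -c₁x` and `τ ≤ M` backwards in time gives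
`τ(t) ≥ τ(0) + c₁(log x(0) - log x(t))/(2M)`. -/
theorem stmt5 (c₁ M : ℝ) (hc₁ : 0 < c₁) (hM : 0 < M) (x τ : ℝ → ℝ)
    (hxd : DifferentiableOn ℝ x (Set.Iic 0)) (hτd : DifferentiableOn ℝ τ (Set.Iic 0))
    (hxpos : ∀ t : ℝ, t ≤ 0 → 0 < x t)
    (hx' : ∀ t : ℝ, t ≤ 0 → derivWithin x (Set.Iic 0) t = 2 * τ t * (x t) ^ 2)
    (hτ' : ∀ t : ℝ, t ≤ 0 → derivWithin τ (Set.Iic 0) t ≤ -c₁ * x t)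
    (hτM : ∀ t : ℝ, t ≤ 0 → τ t ≤ M) :
    ∀ t : ℝ, t ≤ 0 →
      τ 0 + c₁ * (Real.log (x 0) - Real.log (x t)) / (2 * M) ≤ τ t := by
  set g : ℝ → ℝ := fun t => τ t + c₁ / (2 * M) * Real.log (x t) with hg
  have hgd : DifferentiableOn ℝ g (Set.Iic 0) := by
    apply hτd.add
    exact (DifferentiableOn.log hxd (fun t ht => (hxpos t ht).ne')).const_mul _
  have hcont : ContinuousOn g (Set.Iic 0) := hgd.continuousOn
  have hint : interior (Set.Iic (0:ℝ)) = Set.Iio 0 := interior_Iic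
  -- derivative computation at interior points
  have key : AntitoneOn g (Set.Iic 0) := by
    apply antitoneOn_of_deriv_nonpos (convex_Iic 0) hcont
    · rw [hint]
      exact fun t ht => ((hgd t (Set.mem_Iic.2 (le_of_lt ht))).differentiableAt
        (Iic_mem_nhds ht)).differentiableWithinAt
    · intro t ht
      rw [hint] at ht
      have hmem : Set.Iic (0:ℝ) ∈ nhds t := Iic_mem_nhds ht
      have ht' : t ≤ 0 := le_of_lt ht
      have hxda : DifferentiableAt ℝ x t := (hxd t ht').differentiableAt hmem
      have hτda : DifferentiableAt ℝ τ t := (hτd t ht').differentiableAt hmem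
      have hxt : (0:ℝ) < x t := hxpos t ht'
      have hdx : deriv x t = 2 * τ t * (x t) ^ 2 := by
        rw [← derivWithin_of_mem_nhds hmem]; exact hx' t ht'
      have hdτ : deriv τ t ≤ -c₁ * x t := by
        rw [← derivWithin_of_mem_nhds hmem]; exact hτ' t ht'
      have hdg : deriv g t = deriv τ t + c₁ / (2 * M) * (deriv x t / x t) := by
        rw [hg]
        have hlog : HasDerivAt (fun s => Real.log (x s)) ((x t)⁻¹ * deriv x t) t :=
          (Real.hasDerivAt_log hxt.ne').comp t hxda.hasDerivAt
        rw [deriv_fun_add hτda (((hxda.log hxt.ne').const_mul _))]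
        congr 1
        rw [deriv_const_mul _ (hxda.log hxt.ne'), hlog.deriv]
        ring
      rw [hdg, hdx]
      have h1 : 2 * τ t * x t ^ 2 / x t = 2 * τ t * x t := by
        field_simp
      rw [h1]
      have h2 : c₁ / (2 * M) * (2 * τ t * x t) = c₁ * τ t * x t / M := by
        field_simp
      rw [h2]
      have hτle : τ t ≤ M := hτM t ht'
      have : c₁ * τ t * x t / M ≤ c₁ * x t := by
        rw [div_le_iff₀ hM]
        have := mul_le_mul_of_nonneg_right (mul_le_mul_of_nonneg_left hτle hc₁.le)
          hxt.le
        nlinarith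
      linarith
  intro t ht
  have := key (Set.mem_Iic.2 ht) (Set.mem_Iic.2 le_rfl) ht
  simp only [hg] at this
  have h2M : (2 * M) ≠ 0 := by positivity
  have heq : c₁ * (Real.log (x 0) - Real.log (x t)) / (2 * M)
      = c₁ / (2 * M) * Real.log (x 0) - c₁ / (2 * M) * Real.log (x t) := by
    field_simp
  rw [heq]; linarith
end

section
/- Let c₁ > 0 and M > 0. Let x, τ : (−∞, 0] → ℝ be differentiable with x(t) > 0, x′(t) = 2τ(t)x(t)², τ′(t) ≤ −c₁x(t), and τ(t) ≤ M for all t ≤ 0. Then x admits the uniform lower bound x(t) ≥ x(0)·exp(−2M(M − τ(0))/c₁) for all t ≤ 0; in particular x(t) does not tend to 0 as t → −∞. -/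
open Filter Topology

/-- The contradiction step in Step 2 of the proof of Lemma 3.1: under
`ẋ = 2τx²`, `τ̇ ≤ -c₁x` and `τ ≤ M` on `(-∞,0]`, the function `x` admits a
uniform positive lower bound, so it cannot tend to `0` as `t → -∞`. -/
theorem stmt6 (c₁ M : ℝ) (hc₁ : 0 < c₁) (hM : 0 < M) (x τ : ℝ → ℝ)
    (hxd : DifferentiableOn ℝ x (Set.Iic 0)) (hτd : DifferentiableOn ℝ τ (Set.Iic 0))
    (hxpos : ∀ t : ℝ, t ≤ 0 → 0 < x t)
    (hx' : ∀ t : ℝ, t ≤ 0 → derivWithin x (Set.Iic 0) t = 2 * τ t * (x t) ^ 2)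
    (hτ' : ∀ t : ℝ, t ≤ 0 → derivWithin τ (Set.Iic 0) t ≤ -c₁ * x t)
    (hτM : ∀ t : ℝ, t ≤ 0 → τ t ≤ M) :
    (∀ t : ℝ, t ≤ 0 → x 0 * Real.exp (-2 * M * (M - τ 0) / c₁) ≤ x t) ∧
    ¬ Tendsto x atBot (𝓝 0) := by
  set f : ℝ → ℝ := fun t => Real.log (x t) + (2 * M / c₁) * τ t with hf
  have hMc : (0:ℝ) ≤ 2 * M / c₁ := by positivity
  have hfd : ∀ t ∈ Set.Iic (0:ℝ), HasDerivWithinAt f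
      (derivWithin x (Set.Iic 0) t / x t + (2 * M / c₁) * derivWithin τ (Set.Iic 0) t)
      (Set.Iic 0) t := by
    intro t ht
    exact ((hxd t ht).hasDerivWithinAt.log (ne_of_gt (hxpos t ht))).add
      ((hτd t ht).hasDerivWithinAt.const_mul _)
  have hder : ∀ t ∈ Set.Iic (0:ℝ),
      derivWithin x (Set.Iic 0) t / x t + (2 * M / c₁) * derivWithin τ (Set.Iic 0) t ≤ 0 := by
    intro t ht
    have hxt := hxpos t ht
    have h1 : derivWithin x (Set.Iic 0) t / x t = 2 * τ t * x t := by
      rw [hx' t ht]; field_simp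
    have h2 : 2 * τ t * x t ≤ 2 * M * x t := by
      have := hτM t ht
      nlinarith
    have h3 : (2 * M / c₁) * derivWithin τ (Set.Iic 0) t ≤ (2 * M / c₁) * (-c₁ * x t) :=
      mul_le_mul_of_nonneg_left (hτ' t ht) hMc
    have h4 : (2 * M / c₁) * (-c₁ * x t) = -(2 * M * x t) := by
      field_simp
    rw [h1]
    rw [h4] at h3
    linarith
  have hanti : AntitoneOn f (Set.Iic 0) := by
    apply antitoneOn_of_deriv_nonpos (convex_Iic 0)
    · exact fun t ht => ((hfd t ht).continuousWithinAt)
    · intro t ht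
      rw [interior_Iic] at ht
      exact ((hfd t (Set.mem_Iic.mpr (le_of_lt (Set.mem_Iio.mp ht)))).hasDerivAt (Iic_mem_nhds ht)).differentiableAt.differentiableWithinAt
    · intro t ht
      rw [interior_Iic] at ht
      rw [((hfd t (Set.mem_Iic.mpr (le_of_lt (Set.mem_Iio.mp ht)))).hasDerivAt (Iic_mem_nhds ht)).deriv]
      exact hder t (Set.mem_Iic.mpr (le_of_lt (Set.mem_Iio.mp ht)))
  have key : ∀ t : ℝ, t ≤ 0 → x 0 * Real.exp (-2 * M * (M - τ 0) / c₁) ≤ x t := by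
    intro t ht
    have hft : f 0 ≤ f t := hanti (Set.mem_Iic.mpr ht) (Set.mem_Iic.mpr le_rfl) ht
    have hτt := hτM t ht
    have hlog : Real.log (x 0) + (-2 * M * (M - τ 0) / c₁) ≤ Real.log (x t) := by
      simp only [hf] at hft
      have h5 : (2 * M / c₁) * τ t ≤ (2 * M / c₁) * M := mul_le_mul_of_nonneg_left hτt hMc
      have h6 : -2 * M * (M - τ 0) / c₁ = (2 * M / c₁) * τ 0 - (2 * M / c₁) * M := by
        field_simp; ring
      linarith
    calc x 0 * Real.exp (-2 * M * (M - τ 0) / c₁)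
        = Real.exp (Real.log (x 0) + (-2 * M * (M - τ 0) / c₁)) := by
          rw [Real.exp_add, Real.exp_log (hxpos 0 le_rfl)]
      _ ≤ Real.exp (Real.log (x t)) := Real.exp_le_exp.mpr hlog
      _ = x t := Real.exp_log (hxpos t ht)
  refine ⟨key, ?_⟩
  intro htend
  have hKpos : 0 < x 0 * Real.exp (-2 * M * (M - τ 0) / c₁) := by
    have := hxpos 0 le_rfl; positivity
  have hev : ∀ᶠ t in atBot, x t < x 0 * Real.exp (-2 * M * (M - τ 0) / c₁) :=
    htend (Iio_mem_nhds hKpos)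
  have hle : ∀ᶠ t : ℝ in atBot, t ≤ 0 := eventually_le_atBot 0
  rcases (hev.and hle).exists with ⟨t, h1, h2⟩
  exact absurd (key t h2) (not_le.mpr h1)
end

section
/- Let λ > 0, c₁ > 0, and M ≥ √λ. Let x, τ : (−∞, 0] → ℝ be differentiable and suppose: x(t) > 0 and |τ(t)| ≤ M for all t ≤ 0; x′(t) = 2τ(t)x(t)² for all t ≤ 0; τ′(t) ≤ −c₁x(t) at every t ≤ 0 at which τ(t) ≤ 2√λ/3; and x(t) → 0 as t → −∞. Then there exists T > 0 such that τ(t) > 2√λ/3 for all t ≤ −T. -/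
open Filter Topology

open MeasureTheory intervalIntegral in
private lemma sub_le_integral_aux (a b : ℝ) (hab : a ≤ b) (f f' φ : ℝ → ℝ)
    (hf : ContinuousOn f (Set.Icc a b)) (hφ : ContinuousOn φ (Set.Icc a b))
    (hder : ∀ t ∈ Set.Ioo a b, HasDerivAt f (f' t) t)
    (hle : ∀ t ∈ Set.Ioo a b, f' t ≤ φ t) :
    f b - f a ≤ ∫ t in a..b, φ t := by
  rcases hab.eq_or_lt with rfl | hab
  · simp
  set F : ℝ → ℝ := fun t => (∫ u in a..t, φ u) - f t with hF
  have huIcc : Set.uIcc a b = Set.Icc a b := Set.uIcc_of_le hab.le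
  have hintOn : IntegrableOn φ (Set.uIcc a b) volume := by
    rw [huIcc]
    exact hφ.integrableOn_compact isCompact_Icc
  have hFd : ∀ t ∈ Set.Ioo a b, HasDerivAt F (φ t - f' t) t := by
    intro t ht
    have hint : IntervalIntegrable φ volume a t := by
      apply ContinuousOn.intervalIntegrable
      apply hφ.mono
      rw [Set.uIcc_of_le ht.1.le]
      exact Set.Icc_subset_Icc le_rfl ht.2.le
    have hmeas : StronglyMeasurableAtFilter φ (𝓝 t) volume :=
      (hφ.mono Set.Ioo_subset_Icc_self).stronglyMeasurableAtFilter isOpen_Ioo t ht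
    have hcont : ContinuousAt φ t := hφ.continuousAt (Icc_mem_nhds ht.1 ht.2)
    exact (integral_hasDerivAt_right hint hmeas hcont).sub (hder t ht)
  have hmono : MonotoneOn F (Set.Icc a b) := by
    apply monotoneOn_of_deriv_nonneg (convex_Icc a b)
    · exact ((continuousOn_primitive_interval hintOn).mono (by rw [huIcc])).sub hf
    · rw [interior_Icc]
      exact fun t ht => (hFd t ht).differentiableAt.differentiableWithinAt
    · rw [interior_Icc]
      intro t ht
      rw [(hFd t ht).deriv]
      linarith [hle t ht]
  have := hmono (Set.left_mem_Icc.2 hab.le) (Set.right_mem_Icc.2 hab.le) hab.le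
  simp only [hF, intervalIntegral.integral_same] at this
  linarith

/-- Coordinate form of the claim in Step 2 of the proof of Lemma 3.1: along a
backward bicharacteristic with `x(t) → 0` as `t → -∞`, eventually
`τ(t) > 2√λ/3`. -/
theorem stmt7 (lam c₁ M : ℝ) (hlam : 0 < lam) (hc₁ : 0 < c₁)
    (hM : Real.sqrt lam ≤ M) (x τ : ℝ → ℝ)
    (hxd : DifferentiableOn ℝ x (Set.Iic 0)) (hτd : DifferentiableOn ℝ τ (Set.Iic 0))
    (hxpos : ∀ t : ℝ, t ≤ 0 → 0 < x t)
    (hτM : ∀ t : ℝ, t ≤ 0 → |τ t| ≤ M)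
    (hx' : ∀ t : ℝ, t ≤ 0 → derivWithin x (Set.Iic 0) t = 2 * τ t * (x t) ^ 2)
    (hτ' : ∀ t : ℝ, t ≤ 0 → τ t ≤ 2 * Real.sqrt lam / 3 →
      derivWithin τ (Set.Iic 0) t ≤ -c₁ * x t)
    (hx0 : Tendsto x atBot (𝓝 0)) :
    ∃ T : ℝ, 0 < T ∧ ∀ t : ℝ, t ≤ -T → 2 * Real.sqrt lam / 3 < τ t := by
  by_contra hcon
  push_neg at hcon
  set κ : ℝ := 2 * Real.sqrt lam / 3 with hκdef
  have hsq : 0 < Real.sqrt lam := Real.sqrt_pos.2 hlam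
  have hκ : 0 < κ := by positivity
  have hM0 : 0 < M := lt_of_lt_of_le hsq hM
  have hτc : ContinuousOn τ (Set.Iic 0) := hτd.continuousOn
  have hxc : ContinuousOn x (Set.Iic 0) := hxd.continuousOn
  have hmem : ∀ t : ℝ, t < 0 → Set.Iic (0:ℝ) ∈ 𝓝 t := fun t ht => Iic_mem_nhds ht
  have hτder : ∀ t : ℝ, t < 0 → HasDerivAt τ (derivWithin τ (Set.Iic 0) t) t := by
    intro t ht
    have := (hτd t ht.le).differentiableAt (hmem t ht)
    rw [derivWithin_of_mem_nhds (hmem t ht)]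
    exact this.hasDerivAt
  have hxder : ∀ t : ℝ, t < 0 → HasDerivAt x (derivWithin x (Set.Iic 0) t) t := by
    intro t ht
    have := (hxd t ht.le).differentiableAt (hmem t ht)
    rw [derivWithin_of_mem_nhds (hmem t ht)]
    exact this.hasDerivAt
  -- forward invariance of the set {τ ≤ κ}
  have inv : ∀ s t : ℝ, s ≤ t → t ≤ 0 → τ s ≤ κ → τ t ≤ κ := by
    intro s t hst ht0 hs
    by_contra hgt
    push_neg at hgt
    have hst' : s < t := by
      rcases hst.eq_or_lt with rfl | h
      · exact absurd hs (not_le.2 hgt)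
      · exact h
    set A : Set ℝ := Set.Icc s t ∩ τ ⁻¹' Set.Iic κ with hA
    have hAcl : IsClosed A :=
      ContinuousOn.preimage_isClosed_of_isClosed
        (hτc.mono (fun u hu => le_trans hu.2 ht0)) isClosed_Icc isClosed_Iic
    have hAne : A.Nonempty := ⟨s, ⟨Set.left_mem_Icc.2 hst, hs⟩⟩
    have hAbdd : BddAbove A := ⟨t, fun u hu => hu.1.2⟩
    obtain ⟨u₀, hu₀A, hu₀ub⟩ : ∃ u₀ ∈ A, ∀ u ∈ A, u ≤ u₀ :=
      ⟨sSup A, hAcl.csSup_mem hAne hAbdd, fun u hu => le_csSup hAbdd hu⟩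
    have hu₀t : u₀ < t := lt_of_le_of_ne hu₀A.1.2 (by
      rintro rfl
      exact absurd hu₀A.2 (not_le.2 hgt))
    have hu₀0 : u₀ < 0 := lt_of_lt_of_le hu₀t ht0
    have hbig : ∀ u ∈ Set.Ioc u₀ t, κ < τ u := by
      intro u hu
      by_contra hle
      push_neg at hle
      have : u ∈ A := ⟨⟨hu₀A.1.1.trans hu.1.le, hu.2⟩, hle⟩
      exact absurd (hu₀ub u this) (not_le.2 hu.1)
    have hd : derivWithin τ (Set.Iic 0) u₀ < 0 :=
      lt_of_le_of_lt (hτ' u₀ hu₀0.le hu₀A.2)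
        (by have := hxpos u₀ hu₀0.le; nlinarith)
    have hslope : Tendsto (slope τ u₀) (𝓝[>] u₀) (𝓝 (derivWithin τ (Set.Iic 0) u₀)) :=
      (hasDerivAt_iff_tendsto_slope.1 (hτder u₀ hu₀0)).mono_left
        (nhdsWithin_mono _ (fun u hu => ne_of_gt hu))
    have hev1 : ∀ᶠ u in 𝓝[>] u₀, slope τ u₀ u < 0 :=
      hslope.eventually (eventually_lt_nhds hd)
    have hev2 : ∀ᶠ u in 𝓝[>] u₀, u ∈ Set.Ioc u₀ t := by
      filter_upwards [eventually_nhdsWithin_of_eventually_nhds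
        (eventually_le_nhds hu₀t), self_mem_nhdsWithin] with u h1 h2
      exact ⟨h2, h1⟩
    obtain ⟨u, h1, h2⟩ := (hev1.and hev2).exists
    have hupos : 0 < u - u₀ := sub_pos.2 h2.1
    rw [slope_def_field, div_neg_iff] at h1
    have hlt : τ u < τ u₀ := by
      rcases h1 with ⟨_, h⟩ | ⟨h, _⟩ <;> linarith
    exact absurd (hbig u h2) (not_lt.2 (hlt.le.trans hu₀A.2))
  -- hence τ ≤ κ everywhere on (-∞, 0]
  have hall : ∀ t : ℝ, t ≤ 0 → τ t ≤ κ := by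
    intro t ht
    obtain ⟨s, hs1, hs2⟩ := hcon (max 1 (1 - t)) (lt_of_lt_of_le one_pos (le_max_left _ _))
    have hst : s ≤ t := by
      have h1 : 1 - t ≤ max 1 (1 - t) := le_max_right _ _
      linarith
    exact inv s t hst ht hs2
  -- the integral of x over any interval is uniformly bounded
  have hint : ∀ a b : ℝ, a ≤ b → b < 0 → ∫ t in a..b, x t ≤ 2 * M / c₁ := by
    intro a b hab hb0
    have hsub : Set.Icc a b ⊆ Set.Iic 0 := fun u hu => hu.2.trans hb0.le
    have key := sub_le_integral_aux a b hab τ (fun t => derivWithin τ (Set.Iic 0) t)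
      (fun t => -c₁ * x t) (hτc.mono hsub) (continuousOn_const.mul (hxc.mono hsub))
      (fun t ht => hτder t (lt_of_lt_of_le ht.2 hb0.le))
      (fun t ht => hτ' t (ht.2.trans hb0).le (hall t (ht.2.trans hb0).le))
    rw [intervalIntegral.integral_const_mul] at key
    have h1 := hτM a (hab.trans hb0.le)
    have h2 := hτM b hb0.le
    rw [abs_le] at h1 h2
    rw [le_div_iff₀ hc₁]
    nlinarith
  -- uniform bound on the variation of log x
  have hlog : ∀ a : ℝ, a ≤ -1 →
      Real.log (x (-1)) - Real.log (x a) ≤ 2 * M * (2 * M / c₁) := by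
    intro a ha
    have hsub : Set.Icc a (-1:ℝ) ⊆ Set.Iic 0 := fun u hu => hu.2.trans (by norm_num)
    have key := sub_le_integral_aux a (-1) ha (fun t => Real.log (x t))
      (fun t => 2 * τ t * x t) (fun t => 2 * M * x t)
      ((hxc.mono hsub).log (fun u hu => (hxpos u (hsub hu)).ne'))
      (continuousOn_const.mul (hxc.mono hsub))
      (fun t ht => ?_) (fun t ht => ?_)
    · rw [intervalIntegral.integral_const_mul] at key
      have h := hint a (-1) ha (by norm_num)
      have h2 : 2 * M * ∫ t in a..(-1:ℝ), x t ≤ 2 * M * (2 * M / c₁) :=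
        mul_le_mul_of_nonneg_left h (by positivity)
      linarith
    · -- derivative of log x
      have ht0 : t < 0 := lt_trans ht.2 (by norm_num)
      have hxt : x t ≠ 0 := (hxpos t ht0.le).ne'
      have h := (hxder t ht0).log hxt
      rw [hx' t ht0.le] at h
      have : 2 * τ t * x t ^ 2 / x t = 2 * τ t * x t := by
        field_simp
      rwa [this] at h
    · -- bound on the derivative
      have ht0 : t < 0 := lt_trans ht.2 (by norm_num)
      have h1 := hτM t ht0.le
      rw [abs_le] at h1
      have h2 := hxpos t ht0.le
      show 2 * τ t * x t ≤ 2 * M * x t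
      nlinarith [mul_nonneg (sub_nonneg.2 h1.2) h2.le]
  -- x is bounded below on (-∞, -1], contradiction with x → 0
  set C : ℝ := 2 * M * (2 * M / c₁) with hC
  set δ : ℝ := x (-1) * Real.exp (-C) with hδ
  have hδpos : 0 < δ := mul_pos (hxpos (-1) (by norm_num)) (Real.exp_pos _)
  have hlb : ∀ a : ℝ, a ≤ -1 → δ ≤ x a := by
    intro a ha
    have h := hlog a ha
    have hxa : 0 < x a := hxpos a (by linarith)
    have hx1 : 0 < x (-1) := hxpos (-1) (by norm_num)
    have h2 : Real.log (x (-1)) - C ≤ Real.log (x a) := by linarith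
    calc δ = Real.exp (Real.log (x (-1)) - C) := by
            rw [hδ, Real.exp_sub, Real.exp_log hx1, Real.exp_neg, div_eq_mul_inv]
      _ ≤ Real.exp (Real.log (x a)) := Real.exp_le_exp.2 h2
      _ = x a := Real.exp_log hxa
  obtain ⟨a, ha1, ha2⟩ :=
    ((hx0.eventually (eventually_lt_nhds hδpos)).and (eventually_le_atBot (-1))).exists
  exact absurd (hlb a ha2) (not_le.2 ha1)
end

section
/- Let m ≥ 1, ε > 0, λ > 0. Let h′ : ℝ × ℝᵐ × ℝᵐ → ℝ be continuously differentiable with h′ ≥ 0 and μ·∂_μh′(x,y,μ) = 2h′(x,y,μ). Set p(x,y,τ,μ) = τ² + h′(x,y,μ) and let V be the vector field V = 2τx²∂ₓ + 2τxμ·∂_μ − (2xh′ + x²∂ₓh′)∂_τ + x(∂_μh′·∂_y − ∂_yh′·∂_μ) on the region {x > 0}. Let χ, ρ, ψ : ℝ → [0, ∞) be continuously differentiable with χ′ ≥ 0, ρ′ ≤ 0, and χ supported in (√λ/3, ∞). Assume that x|∂ₓh′(x,y,μ)| ≤ 2h′(x,y,μ) at every point of {x > 0} where χ′(τ)ρ(x)ψ(p)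 ≠ 0. Define q(x,y,τ,μ) = x^{−ε}χ(τ)ρ(x)ψ(p). Then at every point with x > 0: V q ≤ −2ετ x^{1−ε} χ(τ)ρ(x)ψ(p) ≤ 0; in particular, at points where τ ≥ 2√λ/3 and χ(τ) = ρ(x) = ψ(p) = 1, one has V q ≤ −(4√λ ε/3) x^{1−ε}. -/
/-- `∂ₓh'`: the partial derivative of the metric coefficient in the boundary
defining variable. -/
noncomputable def hDx {m : ℕ} (h' : ℝ × (Fin m → ℝ) × (Fin m → ℝ) → ℝ)
    (a : ℝ) (y μ : Fin m → ℝ) : ℝ :=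
  fderiv ℝ h' (a, y, μ) (1, 0, 0)

/-- `∂_{yᵢ}h'`. -/
noncomputable def hDy {m : ℕ} (h' : ℝ × (Fin m → ℝ) × (Fin m → ℝ) → ℝ)
    (a : ℝ) (y μ : Fin m → ℝ) (i : Fin m) : ℝ :=
  fderiv ℝ h' (a, y, μ) (0, Pi.single i 1, 0)

/-- `∂_{μᵢ}h'`. -/
noncomputable def hDmu {m : ℕ} (h' : ℝ × (Fin m → ℝ) × (Fin m → ℝ) → ℝ)
    (a : ℝ) (y μ : Fin m → ℝ) (i : Fin m) : ℝ :=
  fderiv ℝ h' (a, y, μ) (0, 0, Pi.single i 1)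

/-- The escape function `q(x,y,τ,μ) = x^{-ε} χ(τ) ρ(x) ψ(τ² + h'(x,y,μ))`. -/
noncomputable def escapeQ {m : ℕ} (ε : ℝ) (χ ρ ψ : ℝ → ℝ)
    (h' : ℝ × (Fin m → ℝ) × (Fin m → ℝ) → ℝ)
    (z : ℝ × (Fin m → ℝ) × ℝ × (Fin m → ℝ)) : ℝ :=
  z.1 ^ (-ε) * χ z.2.2.1 * ρ z.1 * ψ (z.2.2.1 ^ 2 + h' (z.1, z.2.1, z.2.2.2))

/-- The Hamiltonian vector field
`V = 2τx²∂ₓ + 2τxμ·∂_μ − (2xh′ + x²∂ₓh′)∂_τ + x(∂_μh′·∂_y − ∂_yh′·∂_μ)`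
of `p = τ² + h'` in scattering coordinates `(x, y, τ, μ)`. -/
noncomputable def hamVec {m : ℕ} (h' : ℝ × (Fin m → ℝ) × (Fin m → ℝ) → ℝ)
    (z : ℝ × (Fin m → ℝ) × ℝ × (Fin m → ℝ)) :
    ℝ × (Fin m → ℝ) × ℝ × (Fin m → ℝ) :=
  (2 * z.2.2.1 * z.1 ^ 2,
   fun i => z.1 * hDmu h' z.1 z.2.1 z.2.2.2 i,
   -(2 * z.1 * h' (z.1, z.2.1, z.2.2.2) + z.1 ^ 2 * hDx h' z.1 z.2.1 z.2.2.2),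
   fun i => 2 * z.2.2.1 * z.1 * z.2.2.2 i - z.1 * hDy h' z.1 z.2.1 z.2.2.2 i)

/-- Decomposing the action of a continuous linear functional on
`ℝ × (Fin m → ℝ) × (Fin m → ℝ)` into coordinate contributions. -/
lemma clm_decomp {m : ℕ} (D : (ℝ × (Fin m → ℝ) × (Fin m → ℝ)) →L[ℝ] ℝ)
    (vx : ℝ) (vy vμ : Fin m → ℝ) :
    D (vx, vy, vμ) = vx * D (1, 0, 0) + (∑ i, vy i * D (0, Pi.single i 1, 0))
      + ∑ i, vμ i * D (0, 0, Pi.single i 1) := by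
  have h : (vx, vy, vμ) = vx • ((1:ℝ), (0:Fin m → ℝ), (0:Fin m → ℝ))
      + (∑ i, vy i • ((0:ℝ), (Pi.single i 1 : Fin m → ℝ), (0:Fin m → ℝ)))
      + (∑ i, vμ i • ((0:ℝ), (0:Fin m → ℝ), (Pi.single i 1 : Fin m → ℝ))) := by
    refine Prod.ext ?_ (Prod.ext ?_ ?_) <;>
      simp [Prod.fst_sum, Prod.snd_sum, ← Pi.single_smul, Finset.univ_sum_single]
  rw [h]
  simp only [map_add, map_sum, map_smul, smul_eq_mul]

/-- The escape function computation of Step 3 of the proof of Lemma 3.1: on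
`{x > 0}`, the derivative of `q = x^{-ε}χ(τ)ρ(x)ψ(p)` along the Hamiltonian
vector field `V` of `p = τ² + h'` is bounded by `-2ετx^{1-ε}χρψ(p) ≤ 0`, and is
at most `-(4√λ ε/3)x^{1-ε}` where `τ ≥ 2√λ/3` and `χ(τ) = ρ(x) = ψ(p) = 1`. -/
theorem stmt8 (m : ℕ) (hm : 1 ≤ m) (ε lam : ℝ) (hε : 0 < ε) (hlam : 0 < lam)
    (h' : ℝ × (Fin m → ℝ) × (Fin m → ℝ) → ℝ) (hC1 : ContDiff ℝ 1 h')
    (hpos : ∀ p, 0 ≤ h' p)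
    (hhom : ∀ (a : ℝ) (y μ : Fin m → ℝ),
      ∑ i, μ i * hDmu h' a y μ i = 2 * h' (a, y, μ))
    (χ ρ ψ : ℝ → ℝ)
    (hχ0 : ∀ s, 0 ≤ χ s) (hρ0 : ∀ s, 0 ≤ ρ s) (hψ0 : ∀ s, 0 ≤ ψ s)
    (hχC : ContDiff ℝ 1 χ) (hρC : ContDiff ℝ 1 ρ) (hψC : ContDiff ℝ 1 ψ)
    (hχ' : ∀ s, 0 ≤ deriv χ s) (hρ' : ∀ s, deriv ρ s ≤ 0)
    (hχsupp : Function.support χ ⊆ Set.Ioi (Real.sqrt lam / 3))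
    (hG : ∀ (a t : ℝ) (y μ : Fin m → ℝ), 0 < a →
      deriv χ t * ρ a * ψ (t ^ 2 + h' (a, y, μ)) ≠ 0 →
      a * |hDx h' a y μ| ≤ 2 * h' (a, y, μ)) :
    ∀ (a t : ℝ) (y μ : Fin m → ℝ), 0 < a →
      (fderiv ℝ (escapeQ ε χ ρ ψ h') (a, y, t, μ) (hamVec h' (a, y, t, μ)) ≤
        -2 * ε * t * a ^ (1 - ε) * χ t * ρ a * ψ (t ^ 2 + h' (a, y, μ)) ∧
       -2 * ε * t * a ^ (1 - ε) * χ t * ρ a * ψ (t ^ 2 + h' (a, y, μ)) ≤ 0) ∧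
      (2 * Real.sqrt lam / 3 ≤ t → χ t = 1 → ρ a = 1 →
        ψ (t ^ 2 + h' (a, y, μ)) = 1 →
        fderiv ℝ (escapeQ ε χ ρ ψ h') (a, y, t, μ) (hamVec h' (a, y, t, μ)) ≤
          -(4 * Real.sqrt lam * ε / 3) * a ^ (1 - ε)) := by
  intro a t y μ ha
  set z₀ : ℝ × (Fin m → ℝ) × ℝ × (Fin m → ℝ) := (a, y, t, μ) with hz₀
  set w : ℝ × (Fin m → ℝ) × (Fin m → ℝ) := (a, y, μ) with hw
  set P : ℝ := t ^ 2 + h' w with hP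
  -- derivative construction
  have hid : HasFDerivAt (id : (ℝ × (Fin m → ℝ) × ℝ × (Fin m → ℝ)) → _)
      (ContinuousLinearMap.id ℝ _) z₀ := hasFDerivAt_id z₀
  have hπτ : HasFDerivAt (fun z : ℝ × (Fin m → ℝ) × ℝ × (Fin m → ℝ) => z.2.2.1) _ z₀ :=
    hid.snd.snd.fst
  have hg : HasFDerivAt (fun z : ℝ × (Fin m → ℝ) × ℝ × (Fin m → ℝ) =>
      ((z.1, z.2.1, z.2.2.2) : ℝ × (Fin m → ℝ) × (Fin m → ℝ))) _ z₀ :=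
    HasFDerivAt.prodMk (hid.fst) (HasFDerivAt.prodMk (hid.snd.fst) (hid.snd.snd.snd))
  have hh : HasFDerivAt (fun z : ℝ × (Fin m → ℝ) × ℝ × (Fin m → ℝ) =>
      h' (z.1, z.2.1, z.2.2.2)) _ z₀ :=
    ((hC1.differentiable one_ne_zero w).hasFDerivAt).comp z₀ hg
  have hp : HasFDerivAt (fun z : ℝ × (Fin m → ℝ) × ℝ × (Fin m → ℝ) =>
      z.2.2.1 ^ 2 + h' (z.1, z.2.1, z.2.2.2)) _ z₀ :=
    (((hasDerivAt_pow 2 t).comp_hasFDerivAt z₀ hπτ :)).add hh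
  have hψp : HasFDerivAt (fun z : ℝ × (Fin m → ℝ) × ℝ × (Fin m → ℝ) =>
      ψ (z.2.2.1 ^ 2 + h' (z.1, z.2.1, z.2.2.2))) _ z₀ :=
    ((hψC.differentiable one_ne_zero P).hasDerivAt).comp_hasFDerivAt z₀ hp
  have hx : HasFDerivAt (fun z : ℝ × (Fin m → ℝ) × ℝ × (Fin m → ℝ) =>
      z.1 ^ (-ε)) _ z₀ :=
    ((Real.hasDerivAt_rpow_const (Or.inl ha.ne')).comp_hasFDerivAt z₀ hid.fst :)
  have hχτ : HasFDerivAt (fun z : ℝ × (Fin m → ℝ) × ℝ × (Fin m → ℝ) =>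
      χ z.2.2.1) _ z₀ :=
    ((hχC.differentiable one_ne_zero t).hasDerivAt).comp_hasFDerivAt z₀ hπτ
  have hρx : HasFDerivAt (fun z : ℝ × (Fin m → ℝ) × ℝ × (Fin m → ℝ) =>
      ρ z.1) _ z₀ :=
    (((hρC.differentiable one_ne_zero a).hasDerivAt).comp_hasFDerivAt z₀ hid.fst :)
  have hq : HasFDerivAt (escapeQ ε χ ρ ψ h') _ z₀ :=
    ((hx.mul hχτ).mul hρx).mul hψp
  have hval := hq.fderiv
  -- value of D on the relevant vector
  have hDv : (fderiv ℝ h' w) (2 * t * a ^ 2, (fun i => a * hDmu h' a y μ i),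
      (fun i => 2 * t * a * μ i - a * hDy h' a y μ i))
      = 2 * t * a ^ 2 * hDx h' a y μ + 4 * t * a * h' w := by
    rw [clm_decomp]
    have e1 : (fderiv ℝ h' w) ((1:ℝ), (0 : Fin m → ℝ), (0 : Fin m → ℝ)) = hDx h' a y μ := rfl
    have e2 : ∀ i, (fderiv ℝ h' w) ((0:ℝ), (Pi.single i 1 : Fin m → ℝ), (0 : Fin m → ℝ))
        = hDy h' a y μ i := fun i => rfl
    have e3 : ∀ i, (fderiv ℝ h' w) ((0:ℝ), (0 : Fin m → ℝ), (Pi.single i 1 : Fin m → ℝ))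
        = hDmu h' a y μ i := fun i => rfl
    rw [e1]
    simp only [e2, e3]
    have hsum : (∑ i, a * hDmu h' a y μ i * hDy h' a y μ i)
        + ∑ i, (2 * t * a * μ i - a * hDy h' a y μ i) * hDmu h' a y μ i
        = 2 * t * a * ∑ i, μ i * hDmu h' a y μ i := by
      rw [← Finset.sum_add_distrib, Finset.mul_sum]
      exact Finset.sum_congr rfl (fun i _ => by ring)
    rw [add_assoc, hsum, hhom a y μ]
    show _ = _ + 4 * t * a * h' (a, y, μ)
    ring
  -- closed form of the derivative along the Hamiltonian vector field
  have hkey : fderiv ℝ (escapeQ ε χ ρ ψ h') z₀ (hamVec h' z₀)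
      = 2 * t * a ^ 2 * a ^ (-ε) * χ t * deriv ρ a * ψ P
        - a ^ (-ε) * deriv χ t * ρ a * ψ P
            * (2 * a * h' w + a ^ 2 * hDx h' a y μ)
        - 2 * ε * t * (a ^ (-ε - 1) * a ^ 2) * χ t * ρ a * ψ P := by
    rw [hval]
    simp only [ContinuousLinearMap.add_apply, ContinuousLinearMap.smul_apply,
      ContinuousLinearMap.comp_apply, ContinuousLinearMap.coe_fst',
      ContinuousLinearMap.coe_snd', ContinuousLinearMap.prod_apply,
      ContinuousLinearMap.coe_comp', Function.comp_apply, smul_eq_mul,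
      ContinuousLinearMap.coe_id', id_eq, hamVec, hz₀, Pi.mul_apply]
    rw [hDv]
    have hPdef : ψ (t ^ 2 + h' (a, y, μ)) = ψ P := rfl
    rw [hPdef]
    ring
  clear hval hq hψp hp hh hg hπτ hρx hχτ hx hid hDv
  -- sign facts
  have hsqrt : 0 < Real.sqrt lam := Real.sqrt_pos.mpr hlam
  have htχ : 0 ≤ t * χ t := by
    by_cases hc : χ t = 0
    · simp [hc]
    · have ht : Real.sqrt lam / 3 < t := hχsupp (Function.mem_support.mpr hc)
      have : 0 < t := lt_trans (by positivity) ht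
      exact mul_nonneg this.le (hχ0 t)
  have hAe : 0 ≤ a ^ (-ε) := Real.rpow_nonneg ha.le _
  have hA1 : 0 ≤ a ^ (1 - ε) := Real.rpow_nonneg ha.le _
  have hA2 : 0 ≤ a ^ (-ε - 1) * a ^ 2 :=
    mul_nonneg (Real.rpow_nonneg ha.le _) (sq_nonneg a)
  have hexp : a ^ (-ε - 1) * a ^ 2 = a ^ (1 - ε) := by
    rw [← Real.rpow_natCast a 2, ← Real.rpow_add ha]
    norm_num
    rw [show -ε - 1 + 2 = 1 - ε by ring]
  have hψP : 0 ≤ ψ P := hψ0 P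
  -- term 2 nonpositive
  have hT2 : 2 * t * a ^ 2 * a ^ (-ε) * χ t * deriv ρ a * ψ P ≤ 0 := by
    have h1 : 0 ≤ (t * χ t) * (a ^ 2 * a ^ (-ε)) * ψ P :=
      mul_nonneg (mul_nonneg htχ (mul_nonneg (sq_nonneg a) hAe)) hψP
    have h2 : ((t * χ t) * (a ^ 2 * a ^ (-ε)) * ψ P) * deriv ρ a ≤ 0 :=
      mul_nonpos_of_nonneg_of_nonpos h1 (hρ' a)
    nlinarith [h2]
  -- term 3 nonpositive
  have hT3 : 0 ≤ a ^ (-ε) * deriv χ t * ρ a * ψ P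
      * (2 * a * h' w + a ^ 2 * hDx h' a y μ) := by
    by_cases hc : deriv χ t * ρ a * ψ (t ^ 2 + h' (a, y, μ)) = 0
    · have h0 : deriv χ t * ρ a * ψ P = 0 := hc
      have h1 : a ^ (-ε) * deriv χ t * ρ a * ψ P
          * (2 * a * h' w + a ^ 2 * hDx h' a y μ)
          = a ^ (-ε) * (deriv χ t * ρ a * ψ P)
            * (2 * a * h' w + a ^ 2 * hDx h' a y μ) := by ring
      rw [h1, h0, mul_zero, zero_mul]
    · have hGa := hG a t y μ ha hc
      have habs : -(a * |hDx h' a y μ|) ≤ a * hDx h' a y μ := by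
        have := neg_abs_le (hDx h' a y μ)
        nlinarith [ha.le]
      have hnn : 0 ≤ 2 * a * h' w + a ^ 2 * hDx h' a y μ := by
        have : 0 ≤ 2 * h' (a, y, μ) + a * hDx h' a y μ := by linarith
        have := mul_nonneg ha.le this
        calc (0:ℝ) ≤ a * (2 * h' (a, y, μ) + a * hDx h' a y μ) := this
          _ = 2 * a * h' w + a ^ 2 * hDx h' a y μ := by rw [hw]; ring
      have : 0 ≤ a ^ (-ε) * deriv χ t * ρ a * ψ P :=
        mul_nonneg (mul_nonneg (mul_nonneg hAe (hχ' t)) (hρ0 a)) hψP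
      exact mul_nonneg this hnn
  -- first conclusion
  have main : fderiv ℝ (escapeQ ε χ ρ ψ h') z₀ (hamVec h' z₀)
      ≤ -2 * ε * t * a ^ (1 - ε) * χ t * ρ a * ψ P := by
    rw [hkey, hexp]
    linarith [hT2, hT3]
  have hT1 : -2 * ε * t * a ^ (1 - ε) * χ t * ρ a * ψ P ≤ 0 := by
    have h1 : 0 ≤ (t * χ t) * a ^ (1 - ε) * ρ a * ψ P :=
      mul_nonneg (mul_nonneg (mul_nonneg htχ hA1) (hρ0 a)) hψP
    nlinarith [h1]
  refine ⟨⟨main, hT1⟩, ?_⟩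
  intro ht hχ1 hρ1 hψ1
  have hψ1' : ψ P = 1 := hψ1
  have := main
  rw [hχ1, hρ1, hψ1'] at this
  have hbound : -2 * ε * t * a ^ (1 - ε) * 1 * 1 * 1
      ≤ -(4 * Real.sqrt lam * ε / 3) * a ^ (1 - ε) := by
    have ht' : 2 * Real.sqrt lam / 3 ≤ t := ht
    nlinarith [mul_nonneg hε.le hA1, mul_le_mul_of_nonneg_right ht'
      (mul_nonneg hε.le hA1)]
  exact le_trans this hbound
end
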